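/- Let G be a topological group acting continuously by isometries on a complete CAT(0) space X, and suppose the action is weakly evanescent. If either (i) X is proper (closed balls are compact), or (ii) there exists a countable increasing sequence of compact subsets of G that is cofinal among compact subsets of G (every compact subset of G is contained in one of them), then the action is evanescent. -/

import Mathlib

/-- A map `σ : ℝ → X` is a geodesic (isometric) on the interval `[a, b]`. -/
def IsGeodesicOn {X : Type*} [MetricSpace X] (σ : ℝ → X) (a b : ℝ) : Prop :=
  ∀ s ∈ Set.Icc a b, ∀ t ∈ Set.Icc a b, dist (σ s) (σ t) = |s - t|

/-- A geodesic metric space: any two points are joined by a geodesic segment. -/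
def IsGeodesicSpace (X : Type*) [MetricSpace X] : Prop :=
  ∀ x y : X, ∃ σ : ℝ → X, IsGeodesicOn σ 0 (dist x y) ∧ σ 0 = x ∧ σ (dist x y) = y

/-- A CAT(0) space: a geodesic space satisfying the CN inequality of Bruhat–Tits
for all (metric) midpoints. -/
def IsCAT0 (X : Type*) [MetricSpace X] : Prop :=
  IsGeodesicSpace X ∧
    ∀ x c c' m : X, dist m c = dist c c' / 2 → dist m c' = dist c c' / 2 →
      2 * dist m x ^ 2 ≤ dist c' x ^ 2 + dist c x ^ 2 - dist c' c ^ 2 / 2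

/-- A subset of a metric space is (geodesically) convex if it contains every geodesic
segment joining any two of its points. -/
def GConvex {X : Type*} [MetricSpace X] (A : Set X) : Prop :=
  ∀ (σ : ℝ → X) (a b : ℝ), a ≤ b → IsGeodesicOn σ a b → σ a ∈ A → σ b ∈ A →
    ∀ t ∈ Set.Icc a b, σ t ∈ A

/-- `ρ` is an action of the group `G` on `X` by isometries. -/
def IsIsometricAction {G X : Type*} [Group G] [MetricSpace X] (ρ : G → X → X) : Prop :=
  (∀ x, ρ 1 x = x) ∧ (∀ g h x, ρ (g * h) x = ρ g (ρ h x)) ∧ ∀ g : G, Isometry (ρ g)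

/-- A subset `T ⊆ X` is `Q`-evanescent: the set of displacements `d(g x, x)`,
`g ∈ Q`, `x ∈ T`, is bounded. -/
def QEvanescent {G X : Type*} [MetricSpace X] (ρ : G → X → X) (Q : Set G) (T : Set X) : Prop :=
  ∃ C : ℝ, ∀ g ∈ Q, ∀ x ∈ T, dist (ρ g x) x ≤ C

/-- The action is evanescent: there is an unbounded set which is `Q`-evanescent
for every compact `Q ⊆ G`. -/
def Evanescent {G X : Type*} [TopologicalSpace G] [MetricSpace X] (ρ : G → X → X) : Prop :=
  ∃ T : Set X, ¬ Bornology.IsBounded T ∧ ∀ Q : Set G, IsCompact Q → QEvanescent ρ Q T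

/-- The action is weakly evanescent: for every compact `Q ⊆ G` there is an unbounded
`Q`-evanescent set. -/
def WeaklyEvanescent {G X : Type*} [TopologicalSpace G] [MetricSpace X] (ρ : G → X → X) : Prop :=
  ∀ Q : Set G, IsCompact Q → ∃ T : Set X, ¬ Bornology.IsBounded T ∧ QEvanescent ρ Q T

section evanescence_aux

variable {X : Type*} [MetricSpace X]

lemma exists_midpoint' (hX : IsCAT0 X) (x y : X) :
    ∃ m : X, dist m x = dist x y / 2 ∧ dist m y = dist x y / 2 := by
  obtain ⟨σ, hσ, h0, h1⟩ := hX.1 x y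
  have hd : (0:ℝ) ≤ dist x y := dist_nonneg
  refine ⟨σ (dist x y / 2), ?_, ?_⟩
  · have := hσ (dist x y / 2) ⟨by linarith, by linarith⟩ 0 ⟨le_refl 0, hd⟩
    rw [h0] at this
    rw [this, show dist x y / 2 - 0 = dist x y / 2 by ring, abs_of_nonneg (by linarith)]
  · have := hσ (dist x y / 2) ⟨by linarith, by linarith⟩ (dist x y) ⟨hd, le_refl _⟩
    rw [h1] at this
    rw [this, show dist x y / 2 - dist x y = -(dist x y / 2) by ring, abs_neg,
      abs_of_nonneg (by linarith)]

lemma midpoint_dist_half' (hX : IsCAT0 X) {x₁ x₂ y m₁ m₂ : X}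
    (h₁ : dist m₁ x₁ = dist x₁ y / 2) (h₁' : dist m₁ y = dist x₁ y / 2)
    (h₂ : dist m₂ x₂ = dist x₂ y / 2) (h₂' : dist m₂ y = dist x₂ y / 2) :
    dist m₁ m₂ ≤ dist x₁ x₂ / 2 := by
  have A := hX.2 m₁ x₂ y m₂ h₂ h₂'
  have B := hX.2 x₂ x₁ y m₁ h₁ h₁'
  have e1 : dist y m₁ = dist x₁ y / 2 := by rw [dist_comm]; exact h₁'
  have e2 : dist x₂ m₁ = dist m₁ x₂ := dist_comm _ _
  have e3 : dist y x₂ = dist x₂ y := dist_comm _ _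
  have e4 : dist y x₁ = dist x₁ y := dist_comm _ _
  have e5 : dist m₂ m₁ = dist m₁ m₂ := dist_comm _ _
  rw [e1, e2, e3, e5] at A
  rw [e3, e4] at B
  nlinarith [dist_nonneg (x := m₁) (y := m₂), dist_nonneg (x := x₁) (y := x₂),
    sq_nonneg (2 * dist m₁ m₂ - dist x₁ x₂), sq_nonneg (2 * dist m₁ m₂ + dist x₁ x₂)]

lemma midpoints_dist' (hX : IsCAT0 X) {x₁ y₁ x₂ y₂ m₁ m₂ : X}
    (h₁ : dist m₁ x₁ = dist x₁ y₁ / 2) (h₁' : dist m₁ y₁ = dist x₁ y₁ / 2)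
    (h₂ : dist m₂ x₂ = dist x₂ y₂ / 2) (h₂' : dist m₂ y₂ = dist x₂ y₂ / 2) :
    dist m₁ m₂ ≤ dist x₁ x₂ / 2 + dist y₁ y₂ / 2 := by
  obtain ⟨m, hm, hm'⟩ := exists_midpoint' hX x₂ y₁
  have d1 : dist m₁ m ≤ dist x₁ x₂ / 2 := midpoint_dist_half' hX h₁ h₁' hm hm'
  have d2 : dist m m₂ ≤ dist y₁ y₂ / 2 := by
    refine midpoint_dist_half' hX (y := x₂) ?_ ?_ ?_ ?_
    · rw [dist_comm y₁ x₂]; exact hm'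
    · rw [dist_comm y₁ x₂]; exact hm
    · rw [dist_comm y₂ x₂]; exact h₂'
    · rw [dist_comm y₂ x₂]; exact h₂
  calc dist m₁ m₂ ≤ dist m₁ m + dist m m₂ := dist_triangle _ _ _
    _ ≤ _ := add_le_add d1 d2

lemma midconvex_nonpos' {g : ℝ → ℝ} {L : ℝ} (hLpos : 0 < L)
    (hgc : ContinuousOn g (Set.Icc 0 L)) (hg0 : g 0 ≤ 0) (hgL : g L ≤ 0)
    (hmid : ∀ s ∈ Set.Icc (0:ℝ) L, ∀ u ∈ Set.Icc (0:ℝ) L, g ((s+u)/2) ≤ (g s + g u)/2) :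
    ∀ t ∈ Set.Icc (0:ℝ) L, g t ≤ 0 := by
  obtain ⟨t₀, ht₀, hmax⟩ := isCompact_Icc.exists_isMaxOn
    ⟨0, by constructor <;> linarith⟩ hgc
  have hmax' : ∀ s ∈ Set.Icc (0:ℝ) L, g s ≤ g t₀ := fun s hs => hmax hs
  intro t ht
  refine le_trans (hmax' t ht) ?_
  have hε0 : 0 ≤ min t₀ (L - t₀) := le_min ht₀.1 (by linarith [ht₀.2])
  have hp : t₀ - min t₀ (L - t₀) ∈ Set.Icc (0:ℝ) L := by
    constructor
    · have := min_le_left t₀ (L - t₀); linarith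
    · linarith [ht₀.2]
  have hq : t₀ + min t₀ (L - t₀) ∈ Set.Icc (0:ℝ) L := by
    constructor
    · linarith [ht₀.1]
    · have := min_le_right t₀ (L - t₀); linarith
  have h2 := hmid _ hp _ hq
  rw [show (t₀ - min t₀ (L - t₀) + (t₀ + min t₀ (L - t₀))) / 2 = t₀ by ring] at h2
  rcases min_cases t₀ (L - t₀) with ⟨he, _⟩ | ⟨he, _⟩
  · rw [he, show t₀ - t₀ = 0 by ring] at h2
    have h3 := hmax' _ hq
    rw [he] at h3
    linarith
  · rw [he, show t₀ + (L - t₀) = L by ring] at h2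
    have h3 := hmax' _ hp
    rw [he] at h3
    linarith

lemma disp_bound' (hX : IsCAT0 X) {φ : X → X} (hφ : Isometry φ) {σ : ℝ → X} {L : ℝ}
    (hL : 0 ≤ L) (hσ : IsGeodesicOn σ 0 L) {t : ℝ} (ht : t ∈ Set.Icc 0 L) :
    dist (φ (σ t)) (σ t) ≤ dist (φ (σ 0)) (σ 0) + (t / L) * dist (φ (σ L)) (σ L) := by
  rcases eq_or_lt_of_le hL with hL0 | hLpos
  · have ht0 : t = 0 := le_antisymm (hL0 ▸ ht.2) ht.1
    rw [ht0, ← hL0]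
    simp
  have fmid : ∀ s ∈ Set.Icc (0:ℝ) L, ∀ u ∈ Set.Icc (0:ℝ) L,
      dist (φ (σ ((s+u)/2))) (σ ((s+u)/2)) ≤
        (dist (φ (σ s)) (σ s) + dist (φ (σ u)) (σ u)) / 2 := by
    intro s hs u hu
    have hmem : (s+u)/2 ∈ Set.Icc (0:ℝ) L := ⟨by linarith [hs.1, hu.1], by linarith [hs.2, hu.2]⟩
    have hsu : dist (σ s) (σ u) = |s - u| := hσ s hs u hu
    have hms : dist (σ ((s+u)/2)) (σ s) = dist (σ s) (σ u) / 2 := by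
      rw [hσ _ hmem s hs, hsu, show (s+u)/2 - s = (u-s)/2 by ring, abs_div, abs_two,
        abs_sub_comm]
    have hmu : dist (σ ((s+u)/2)) (σ u) = dist (σ s) (σ u) / 2 := by
      rw [hσ _ hmem u hu, hsu, show (s+u)/2 - u = (s-u)/2 by ring, abs_div, abs_two]
    have hms' : dist (φ (σ ((s+u)/2))) (φ (σ s)) = dist (φ (σ s)) (φ (σ u)) / 2 := by
      rw [hφ.dist_eq, hφ.dist_eq]; exact hms
    have hmu' : dist (φ (σ ((s+u)/2))) (φ (σ u)) = dist (φ (σ s)) (φ (σ u)) / 2 := by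
      rw [hφ.dist_eq, hφ.dist_eq]; exact hmu
    have key := midpoints_dist' hX hms hmu hms' hmu'
    calc dist (φ (σ ((s+u)/2))) (σ ((s+u)/2))
        = dist (σ ((s+u)/2)) (φ (σ ((s+u)/2))) := dist_comm _ _
      _ ≤ dist (σ s) (φ (σ s)) / 2 + dist (σ u) (φ (σ u)) / 2 := key
      _ = (dist (φ (σ s)) (σ s) + dist (φ (σ u)) (σ u)) / 2 := by
          rw [dist_comm (σ s), dist_comm (σ u)]; ring
  have hσl : LipschitzOnWith 1 σ (Set.Icc 0 L) := by
    rw [lipschitzOnWith_iff_dist_le_mul]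
    intro s hs u hu
    rw [hσ s hs u hu, Real.dist_eq, NNReal.coe_one, one_mul]
  have hσc : ContinuousOn σ (Set.Icc 0 L) := hσl.continuousOn
  have hLne : L ≠ 0 := ne_of_gt hLpos
  have key := midconvex_nonpos' (g := fun s =>
      dist (φ (σ s)) (σ s) -
        ((1 - s/L) * dist (φ (σ 0)) (σ 0) + (s/L) * dist (φ (σ L)) (σ L)))
    hLpos ?_ ?_ ?_ ?_ t ht
  · have h1 : 0 ≤ t / L := div_nonneg ht.1 hL
    have hcoef : (1 - t/L) * dist (φ (σ 0)) (σ 0) ≤ dist (φ (σ 0)) (σ 0) := by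
      nlinarith [dist_nonneg (x := φ (σ 0)) (y := σ 0)]
    linarith
  · apply ContinuousOn.sub
    · exact continuous_dist.comp_continuousOn
        ((hφ.continuous.comp_continuousOn hσc).prodMk hσc)
    · fun_prop
  · simp
  · simp [div_self hLne]
  · intro s hs u hu
    have h1 := fmid s hs u hu
    have h2 : ((1 - ((s+u)/2)/L) * dist (φ (σ 0)) (σ 0) + (((s+u)/2)/L) * dist (φ (σ L)) (σ L)) =
        (((1 - s/L) * dist (φ (σ 0)) (σ 0) + (s/L) * dist (φ (σ L)) (σ L)) +
         ((1 - u/L) * dist (φ (σ 0)) (σ 0) + (u/L) * dist (φ (σ L)) (σ L))) / 2 := by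
      field_simp; ring
    linarith

lemma exists_far' {T : Set X} (hT : ¬ Bornology.IsBounded T) (x₀ : X) (r : ℝ) :
    ∃ x ∈ T, r < dist x₀ x := by
  by_contra h
  push_neg at h
  exact hT ((Metric.isBounded_closedBall (x := x₀) (r := r)).subset
    (fun x hx => by simpa [Metric.mem_closedBall, dist_comm] using h x hx))

/-- Key construction: a point at prescribed distance `R` from `x₀` whose displacement
under every `g ∈ Q` exceeds that of `x₀` by at most `1`. -/
lemma exists_point_at' {G : Type*} (hX : IsCAT0 X) {ρ : G → X → X}
    (hiso : ∀ g : G, Isometry (ρ g)) {Q : Set G} {T : Set X} {C : ℝ}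
    (hT : ¬ Bornology.IsBounded T) (hC : ∀ g ∈ Q, ∀ x ∈ T, dist (ρ g x) x ≤ C)
    (x₀ : X) {R : ℝ} (hR : 0 ≤ R) :
    ∃ y : X, dist y x₀ = R ∧ ∀ g ∈ Q, dist (ρ g y) y ≤ dist (ρ g x₀) x₀ + 1 := by
  set C' := max C 0 with hC'
  have hC'0 : 0 ≤ C' := le_max_right _ _
  obtain ⟨x, hxT, hx⟩ := exists_far' hT x₀ (max (R * (C' + 1)) 1)
  set L := dist x₀ x with hLdef
  have hL1 : R * (C' + 1) < L := lt_of_le_of_lt (le_max_left _ _) hx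
  have hLpos : (0:ℝ) < L := lt_of_le_of_lt (le_trans zero_le_one (le_max_right _ _)) hx
  have hRL : R ≤ L := by nlinarith
  obtain ⟨σ, hσ, h0, h1⟩ := hX.1 x₀ x
  refine ⟨σ R, ?_, ?_⟩
  · have := hσ R ⟨hR, hRL⟩ 0 ⟨le_refl 0, le_of_lt hLpos⟩
    rw [h0] at this
    rw [this, show R - 0 = R by ring, abs_of_nonneg hR]
  · intro g hg
    have hb := disp_bound' hX (hiso g) (le_of_lt hLpos) hσ (t := R) ⟨hR, hRL⟩
    rw [h0, h1] at hb
    have hdx : dist (ρ g x) x ≤ C' := le_trans (hC g hg x hxT) (le_max_left _ _)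
    have hfrac : 0 ≤ R / L := div_nonneg hR (le_of_lt hLpos)
    have h3 : (R / L) * dist (ρ g x) x ≤ (R / L) * C' :=
      mul_le_mul_of_nonneg_left hdx hfrac
    have h4 : (R / L) * C' ≤ 1 := by
      rw [div_mul_eq_mul_div, div_le_one hLpos]
      nlinarith
    linarith

end evanescence_aux
/-- Monod, Proposition: weak evanescence implies evanescence if either (i) `X` is proper, or
(ii) the compact subsets of `G` admit a countable increasing cofinal sequence. -/
theorem evanescent_of_weaklyEvanescent
    {G : Type*} [Group G] [TopologicalSpace G] [IsTopologicalGroup G]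
    {X : Type*} [MetricSpace X] [CompleteSpace X] (hX : IsCAT0 X)
    (ρ : G → X → X) (hact : IsIsometricAction ρ)
    (hcont : Continuous fun p : G × X => ρ p.1 p.2)
    (hweak : WeaklyEvanescent ρ)
    (hcase : ProperSpace X ∨
      ∃ Q : ℕ → Set G, (∀ n, IsCompact (Q n)) ∧ Monotone Q ∧
        ∀ K : Set G, IsCompact K → ∃ n, K ⊆ Q n) :
    Evanescent ρ := by
  obtain ⟨T₀, hT₀u, -⟩ := hweak ∅ isCompact_empty
  have hT₀ne : T₀.Nonempty := by
    by_contra h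
    rw [Set.not_nonempty_iff_eq_empty] at h
    exact hT₀u (h ▸ Bornology.isBounded_empty)
  obtain ⟨x₀, -⟩ := hT₀ne
  have hiso := hact.2.2
  have acont : Continuous fun g : G => dist (ρ g x₀) x₀ := by
    have h1 : Continuous fun g : G => ρ g x₀ :=
      hcont.comp (continuous_id.prodMk continuous_const)
    exact h1.dist continuous_const
  have abdd : ∀ K : Set G, IsCompact K → ∃ A : ℝ, ∀ g ∈ K, dist (ρ g x₀) x₀ ≤ A := by
    intro K hK
    obtain ⟨A, hA⟩ := (hK.image acont).bddAbove
    exact ⟨A, fun g hg => hA (Set.mem_image_of_mem _ hg)⟩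
  have key : ∀ Q : Set G, IsCompact Q → ∀ n : ℕ, ∃ y : X, dist y x₀ = (n:ℝ) ∧
      ∀ g ∈ Q, dist (ρ g y) y ≤ dist (ρ g x₀) x₀ + 1 := by
    intro Q hQ n
    obtain ⟨T, hTu, C, hC⟩ := hweak Q hQ
    exact exists_point_at' hX hiso hTu hC x₀ (Nat.cast_nonneg n)
  have unbdd : ∀ y : ℕ → X, (∀ n, dist (y n) x₀ = (n:ℝ)) →
      ¬ Bornology.IsBounded (Set.range y) := by
    intro y hy hb
    obtain ⟨r, hr⟩ := hb.subset_closedBall x₀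
    have h1 := hr (Set.mem_range_self (⌈r⌉₊ + 1))
    rw [Metric.mem_closedBall, hy] at h1
    have h2 := Nat.le_ceil r
    push_cast at h1
    linarith
  rcases hcase with hproper | ⟨Qs, hQc, hmono, hcof⟩
  · -- proper case
    have key2 : ∀ n : ℕ, ∃ y : X, dist y x₀ = (n:ℝ) ∧
        ∀ Q : Set G, IsCompact Q → ∀ g ∈ Q, dist (ρ g y) y ≤ dist (ρ g x₀) x₀ + 1 := by
      intro n
      set Z : {Q : Set G // IsCompact Q} → Set X := fun Q =>
        {x | dist x x₀ = (n:ℝ)} ∩ ⋂ g ∈ Q.1, {x | dist (ρ g x) x ≤ dist (ρ g x₀) x₀ + 1}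
        with hZ
      have hZmem : ∀ (Q : {Q : Set G // IsCompact Q}) (x : X), x ∈ Z Q ↔
          (dist x x₀ = (n:ℝ) ∧ ∀ g ∈ Q.1, dist (ρ g x) x ≤ dist (ρ g x₀) x₀ + 1) := by
        intro Q x
        simp [hZ, Set.mem_iInter]
      have hZcl : ∀ i, IsClosed (Z i) := by
        intro i
        apply IsClosed.inter
        · exact isClosed_eq (continuous_id.dist continuous_const) continuous_const
        · exact isClosed_biInter fun g _ =>
            isClosed_le ((hiso g).continuous.dist continuous_id) continuous_const
      have hZsub : ∀ i, Z i ⊆ Metric.closedBall x₀ (n:ℝ) := fun i x hx => by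
        rw [Metric.mem_closedBall]; exact le_of_eq ((hZmem i x).1 hx).1
      have hZcomp : ∀ i, IsCompact (Z i) := fun i =>
        (isCompact_closedBall x₀ _).of_isClosed_subset (hZcl i) (hZsub i)
      have hZne : ∀ i, (Z i).Nonempty := by
        intro i
        obtain ⟨y, hy1, hy2⟩ := key i.1 i.2 n
        exact ⟨y, (hZmem i y).2 ⟨hy1, hy2⟩⟩
      have hZdir : Directed (· ⊇ ·) Z := by
        intro i j
        refine ⟨⟨i.1 ∪ j.1, i.2.union j.2⟩, ?_, ?_⟩
        · intro x hx
          rw [hZmem] at hx ⊢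
          exact ⟨hx.1, fun g hg => hx.2 g (Set.mem_union_left _ hg)⟩
        · intro x hx
          rw [hZmem] at hx ⊢
          exact ⟨hx.1, fun g hg => hx.2 g (Set.mem_union_right _ hg)⟩
      obtain ⟨y, hy⟩ := IsCompact.nonempty_iInter_of_directed_nonempty_isCompact_isClosed
        (hι := ⟨⟨∅, isCompact_empty⟩⟩) Z hZdir hZne hZcomp hZcl
      rw [Set.mem_iInter] at hy
      refine ⟨y, ((hZmem _ y).1 (hy ⟨∅, isCompact_empty⟩)).1, ?_⟩
      intro Q hQ g hg
      exact ((hZmem ⟨Q, hQ⟩ y).1 (hy ⟨Q, hQ⟩)).2 g hg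
    choose y hy1 hy2 using key2
    refine ⟨Set.range y, unbdd y hy1, ?_⟩
    intro Q hQ
    obtain ⟨A, hA⟩ := abdd Q hQ
    refine ⟨A + 1, ?_⟩
    rintro g hg x ⟨n, rfl⟩
    exact le_trans (hy2 n Q hQ g hg) (by linarith [hA g hg])
  · -- cofinal sequence case
    choose y hy1 hy2 using fun n => key (Qs n) (hQc n) n
    refine ⟨Set.range y, unbdd y hy1, ?_⟩
    intro K hK
    obtain ⟨m, hm⟩ := hcof K hK
    obtain ⟨A, hA⟩ := abdd K hK
    refine ⟨A + 1 + 2 * m, ?_⟩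
    rintro g hg x ⟨n, rfl⟩
    rcases le_or_gt m n with h | h
    · have hgn : g ∈ Qs n := hmono h (hm hg)
      have h4 := hy2 n g hgn
      have hm0 : (0:ℝ) ≤ (m:ℝ) := Nat.cast_nonneg m
      linarith [hA g hg]
    · have e1 : dist (ρ g (y n)) (ρ g x₀) = dist (y n) x₀ := (hiso g).dist_eq _ _
      have tri : dist (ρ g (y n)) (y n) ≤
          dist (ρ g (y n)) (ρ g x₀) + dist (ρ g x₀) x₀ + dist x₀ (y n) :=
        dist_triangle4 _ _ _ _
      rw [e1, hy1 n, dist_comm x₀ (y n), hy1 n] at tri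
      have h5 : (n:ℝ) ≤ (m:ℝ) := by exact_mod_cast le_of_lt h
      linarith [hA g hg]
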